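/- Let B be a small minimal blocking set with exponent e in PG(n,q), where q = p^t, p prime, e divides t, q0 := p^e ≥ 7 and h := t/e. Then |B| ≤ q0^h + q0^{h−1} + q0^{h−2} + 3·q0^{h−3}. -/

import Mathlib

open Projectivization Module

variable (F : Type*) [Field F] {V : Type*} [AddCommGroup V] [Module F V]

/-- The set of points of `PG(V)` lying in the projectivization of the linear subspace `W`. -/
def projPoints (W : Submodule F V) : Set (Projectivization F V) :=
  {x | x.submodule ≤ W}

/-- A hyperplane of `PG(V)`: the projectivization of a linear subspace of codimension 1. -/
def IsHyperplane (W : Submodule F V) : Prop :=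
  finrank F W + 1 = finrank F V

/-- A line of `PG(V)`: the projectivization of a 2-dimensional linear subspace. -/
def IsProjLine (W : Submodule F V) : Prop := finrank F W = 2

/-- A plane of `PG(V)`: the projectivization of a 3-dimensional linear subspace. -/
def IsProjPlane (W : Submodule F V) : Prop := finrank F W = 3

/-- A blocking set: a set of points meeting every hyperplane. -/
def IsBlockingSet (B : Set (Projectivization F V)) : Prop :=
  ∀ W : Submodule F V, IsHyperplane F W → (B ∩ projPoints F W).Nonempty

/-- A minimal blocking set: no proper subset is a blocking set. -/
def IsMinimalBlockingSet (B : Set (Projectivization F V)) : Prop :=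
  IsBlockingSet F B ∧ ∀ B' ⊂ B, ¬ IsBlockingSet F B'

/-- A small blocking set: `|B| < 3(q+1)/2`. -/
def IsSmall [Fintype F] (B : Set (Projectivization F V)) : Prop :=
  2 * B.ncard < 3 * (Fintype.card F + 1)

/-- Every hyperplane meets `B` in `1 mod p^m` points. -/
def HyperplanesMod (p m : ℕ) (B : Set (Projectivization F V)) : Prop :=
  ∀ W : Submodule F V, IsHyperplane F W → (B ∩ projPoints F W).ncard ≡ 1 [MOD p ^ m]

/-- `e ≥ 1` is the largest integer such that every hyperplane meets `B` in `1 mod p^e` points. -/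
def HasExponent (p : ℕ) (B : Set (Projectivization F V)) (e : ℕ) : Prop :=
  1 ≤ e ∧ HyperplanesMod F p e B ∧ ∀ m, HyperplanesMod F p m B → m ≤ e

/-- A secant line to `B`: a line meeting `B` in at least two points. -/
def IsSecant (B : Set (Projectivization F V)) (L : Submodule F V) : Prop :=
  IsProjLine F L ∧ 2 ≤ (B ∩ projPoints F L).ncard

/-- A `k`-secant to `B`: a line meeting `B` in exactly `k` points. -/
def IsKSecant (k : ℕ) (B : Set (Projectivization F V)) (L : Submodule F V) : Prop :=
  IsProjLine F L ∧ (B ∩ projPoints F L).ncard = k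

/-- Every line through `P` meets `B` in `1 mod p^m` points or in no point. -/
def LinesThroughMod (p m : ℕ) (B : Set (Projectivization F V)) (P : Projectivization F V) : Prop :=
  ∀ L : Submodule F V, IsProjLine F L → P ∈ projPoints F L →
    ((B ∩ projPoints F L).ncard ≡ 1 [MOD p ^ m] ∨ B ∩ projPoints F L = ∅)

/-- The point exponent of `P`: the largest `eP` such that every line through `P`
meets `B` in `1 mod p^eP` points or in no point. -/
def HasPointExponent (p : ℕ) (B : Set (Projectivization F V)) (P : Projectivization F V)
    (eP : ℕ) : Prop :=
  LinesThroughMod F p eP B P ∧ ∀ m, LinesThroughMod F p m B P → m ≤ eP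

/-- The subspace `W` contains three non-collinear points of `B`. -/
def HasNoncollinearTriple (B : Set (Projectivization F V)) (W : Submodule F V) : Prop :=
  ∃ a ∈ B ∩ projPoints F W, ∃ b ∈ B ∩ projPoints F W, ∃ c ∈ B ∩ projPoints F W,
    ¬ ∃ L : Submodule F V,
      IsProjLine F L ∧ a ∈ projPoints F L ∧ b ∈ projPoints F L ∧ c ∈ projPoints F L

/-- A good plane with respect to `B` and `q0`: a plane containing exactly
`q0² + q0 + 1` points of `B`, not all collinear. -/
def IsGoodPlane (q0 : ℕ) (B : Set (Projectivization F V)) (W : Submodule F V) : Prop :=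
  IsProjPlane F W ∧ (B ∩ projPoints F W).ncard = q0 ^ 2 + q0 + 1 ∧
    HasNoncollinearTriple F B W

/-- The linear point set `B(U)` determined by an `F_{q0}`-subspace `U` of `V`,
for a subfield `K = F_{q0}` of `F`. -/
def linearPointSet (K : Subfield F) (U : Submodule K V) : Set (Projectivization F V) :=
  {x | ∃ u : V, ∃ hu : u ≠ 0, u ∈ U ∧ x = Projectivization.mk F u hu}

/-- A set of points of `PG(V)` is `F_{q0}`-linear if it is of the form `B(U)` for some
`F_{q0}`-subspace `U` of `V`, where `F_{q0}` is a subfield of `F` with `q0` elements. -/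
def IsFqLinearSet (q0 : ℕ) (B : Set (Projectivization F V)) : Prop :=
  ∃ K : Subfield F, Nat.card K = q0 ∧ ∃ U : Submodule K V, B = linearPointSet F K U

/-- The linear span of the representative vectors of the points of `B`. -/
noncomputable def spanOfPoints (B : Set (Projectivization F V)) : Submodule F V :=
  ⨆ b ∈ B, b.submodule

/-- `B` spans a `(d-1)`-dimensional projective subspace: the span of the representative
vectors of its points has linear dimension `d`. -/
def SpansVDim (B : Set (Projectivization F V)) (d : ℕ) : Prop :=
  finrank F (spanOfPoints F B) = d


set_option maxHeartbeats 1000000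

section AuxiliaryLemmas

variable {F}


variable {F : Type*} [Field F] {V : Type*} [AddCommGroup V] [Module F V]

/-- Two functionals with comparable kernels are proportional. -/
lemma aux_prop (f g : Module.Dual F V) (hf : f ≠ 0)
    (h : LinearMap.ker f ≤ LinearMap.ker g) : ∃ c : F, g = c • f := by
  obtain ⟨x, hx⟩ : ∃ x, f x ≠ 0 := by
    by_contra hc
    push_neg at hc
    exact hf (by ext v; simp [hc v])
  refine ⟨g x / f x, ?_⟩
  ext v
  have hker : f (v - (f v / f x) • x) = 0 := by
    have h2 : f v / f x * f x = f v := div_mul_cancel₀ _ hx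
    simp [h2]
  have hg : g (v - (f v / f x) • x) = 0 := h hker
  simp only [map_sub, map_smul, sub_eq_zero, smul_eq_mul] at hg
  simp only [LinearMap.smul_apply, smul_eq_mul]
  rw [hg]
  field_simp

lemma aux_ker_hyperplane [FiniteDimensional F V] (f : Module.Dual F V) (hf : f ≠ 0) :
    Module.finrank F (LinearMap.ker f) + 1 = Module.finrank F V := by
  have hsurj : LinearMap.range f = ⊤ := by
    obtain ⟨x, hx⟩ : ∃ x, f x ≠ 0 := by
      by_contra hc
      push_neg at hc
      exact hf (by ext v; simp [hc v])
    rw [Submodule.eq_top_iff']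
    intro c
    exact ⟨(c / f x) • x, by simp [div_mul_cancel₀, hx]⟩
  have := LinearMap.finrank_range_add_finrank_ker f
  rw [hsurj, finrank_top, Module.finrank_self] at this
  omega

lemma aux_exists_ker [FiniteDimensional F V] (W : Submodule F V)
    (hW : Module.finrank F W + 1 = Module.finrank F V) :
    ∃ f : Module.Dual F V, f ≠ 0 ∧ LinearMap.ker f = W := by
  have hq : Module.finrank F (V ⧸ W) = 1 := by
    have := Submodule.finrank_quotient_add_finrank W
    omega
  obtain ⟨e⟩ : Nonempty ((V ⧸ W) ≃ₗ[F] F) :=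
    FiniteDimensional.nonempty_linearEquiv_of_finrank_eq (by rw [hq, Module.finrank_self])
  refine ⟨e.toLinearMap ∘ₗ W.mkQ, ?_, ?_⟩
  · intro hzero
    have h1 : Nontrivial (V ⧸ W) :=
      Module.nontrivial_of_finrank_pos (R := F) (hq ▸ one_pos)
    obtain ⟨y, hy⟩ := exists_ne (0 : V ⧸ W)
    obtain ⟨x, rfl⟩ := W.mkQ_surjective y
    have hx : e (W.mkQ x) = 0 := by
      have := congrFun (congrArg DFunLike.coe hzero) x
      simpa using this
    exact hy ((LinearEquiv.map_eq_zero_iff e).mp hx)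
  · ext x
    simp [LinearMap.mem_ker, Submodule.Quotient.mk_eq_zero, e.map_eq_zero_iff,
      Submodule.mkQ_apply]


lemma aux_finiteV [Fintype F] [FiniteDimensional F V] : Finite V :=
  Finite.of_equiv _ (Module.finBasis F V).equivFun.toEquiv.symm

lemma aux_card_ne_zero {A : Type*} [Finite A] [Zero A] :
    Nat.card {y : A // y ≠ 0} = Nat.card A - 1 := by
  classical
  haveI : Fintype A := Fintype.ofFinite A
  rw [Nat.card_eq_fintype_card, Nat.card_eq_fintype_card]
  have : Fintype.card {y : A // ¬ (y = 0)} = Fintype.card A - Fintype.card {y : A // y = 0} :=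
    Fintype.card_subtype_compl _
  simpa [Fintype.card_subtype_eq] using this

lemma aux_count [Fintype F] [FiniteDimensional F V] (S : Submodule F V) :
    (Fintype.card F - 1) *
      Nat.card {W : Submodule F V // Module.finrank F W + 1 = Module.finrank F V ∧ S ≤ W}
      = Fintype.card F ^ (Module.finrank F V - Module.finrank F S) - 1 := by
  classical
  haveI : Finite V := aux_finiteV (F := F)
  haveI : Finite (Module.Dual F V) := aux_finiteV (F := F)
  set Hyp := {W : Submodule F V // Module.finrank F W + 1 = Module.finrank F V ∧ S ≤ W}
    with hHyp
  have gex : ∀ W : Hyp,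
      ∃ f : Module.Dual F V, f ≠ 0 ∧ LinearMap.ker f = W.1 :=
    fun W => aux_exists_ker W.1 W.2.1
  choose g hg0 hgker using gex
  let Φ : Hyp × Fˣ → {f : Module.Dual F V // f ≠ 0 ∧ S ≤ LinearMap.ker f} := fun Wc =>
    ⟨(Wc.2 : F) • g Wc.1, smul_ne_zero (Units.ne_zero _) (hg0 _), by
      rw [LinearMap.ker_smul _ _ (Units.ne_zero _), hgker]; exact Wc.1.2.2⟩
  have hbij : Function.Bijective Φ := by
    constructor
    · rintro ⟨W, c⟩ ⟨W', c'⟩ hab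
      have hval : (c : F) • g W = (c' : F) • g W' := congrArg Subtype.val hab
      have hker : W = W' := by
        apply Subtype.ext
        rw [← hgker W, ← hgker W', ← LinearMap.ker_smul (g W) (c : F) (Units.ne_zero c),
          ← LinearMap.ker_smul (g W') (c' : F) (Units.ne_zero c'), hval]
      subst hker
      have : (c : F) = (c' : F) := by
        have := smul_left_injective F (hg0 W) hval
        exact this
      simp [Prod.ext_iff, Units.ext_iff, this]
    · rintro ⟨f, hf0, hfS⟩
      set W : Hyp := ⟨LinearMap.ker f, aux_ker_hyperplane f hf0, hfS⟩ with hWdef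
      have hker : LinearMap.ker (g W) = LinearMap.ker f := by rw [hgker W]
      obtain ⟨c, hc⟩ := aux_prop (g W) f (hg0 W) (le_of_eq hker)
      have hc0 : c ≠ 0 := by
        rintro rfl
        rw [zero_smul] at hc
        exact hf0 hc
      exact ⟨⟨W, Units.mk0 c hc0⟩, Subtype.ext (by simp [Φ, hc.symm])⟩
  have h1 : Nat.card {f : Module.Dual F V // f ≠ 0 ∧ S ≤ LinearMap.ker f}
      = Nat.card Hyp * (Fintype.card F - 1) := by
    calc Nat.card {f : Module.Dual F V // f ≠ 0 ∧ S ≤ LinearMap.ker f}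
        = Nat.card (Hyp × Fˣ) := (Nat.card_eq_of_bijective Φ hbij).symm
      _ = Nat.card Hyp * Nat.card Fˣ := Nat.card_prod _ _
      _ = Nat.card Hyp * (Fintype.card F - 1) := by
          rw [Nat.card_units, Nat.card_eq_fintype_card (α := F)]
  have e2 : {f : Module.Dual F V // f ≠ 0 ∧ S ≤ LinearMap.ker f} ≃
      {y : S.dualAnnihilator // y ≠ 0} :=
    { toFun := fun f => ⟨⟨f.1, (Submodule.mem_dualAnnihilator _).mpr fun w hw =>
        LinearMap.mem_ker.mp (f.2.2 hw)⟩,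
        fun h => f.2.1 (by simpa using congrArg Subtype.val h)⟩,
      invFun := fun y => ⟨y.1.1, fun h => y.2 (Subtype.ext h), fun w hw =>
        LinearMap.mem_ker.mpr ((Submodule.mem_dualAnnihilator _).mp y.1.2 w hw)⟩,
      left_inv := fun f => rfl, right_inv := fun y => rfl }
  have h2 : Nat.card {f : Module.Dual F V // f ≠ 0 ∧ S ≤ LinearMap.ker f}
      = Fintype.card F ^ (Module.finrank F V - Module.finrank F S) - 1 := by
    rw [Nat.card_congr e2, aux_card_ne_zero]
    congr 1
    haveI : Fintype (S.dualAnnihilator) := Fintype.ofFinite _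
    rw [Nat.card_eq_fintype_card, card_eq_pow_finrank (K := F)]
    congr 1
    have ha : Module.finrank F (V ⧸ S) = Module.finrank F S.dualAnnihilator :=
      LinearEquiv.finrank_eq (Subspace.quotEquivAnnihilator S)
    have hb := Submodule.finrank_quotient_add_finrank S
    omega
  rw [Nat.mul_comm, ← h1, h2]


lemma aux_mk_eq (x : Projectivization F V) (v : V) (hv : v ≠ 0)
    (hmem : v ∈ x.submodule) : Projectivization.mk F v hv = x := by
  rw [Projectivization.submodule_eq, Submodule.mem_span_singleton] at hmem
  obtain ⟨a, ha⟩ := hmem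
  conv_rhs => rw [← x.mk_rep]
  exact (Projectivization.mk_eq_mk_iff' F v x.rep hv x.rep_nonzero).mpr ⟨a, ha⟩

lemma aux_sup_rank [FiniteDimensional F V] (x y : Projectivization F V) (hxy : x ≠ y) :
    Module.finrank F (x.submodule ⊔ y.submodule : Submodule F V) = 2 := by
  have hinf : x.submodule ⊓ y.submodule = ⊥ := by
    rw [eq_bot_iff]
    rintro v ⟨hvx, hvy⟩
    rcases eq_or_ne v 0 with rfl | hv0
    · exact Submodule.zero_mem ⊥
    · exact absurd ((aux_mk_eq x v hv0 hvx).symm.trans (aux_mk_eq y v hv0 hvy)) hxy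
  have h := Submodule.finrank_sup_add_finrank_inf_eq x.submodule y.submodule
  rw [hinf, finrank_bot, x.finrank_submodule, y.finrank_submodule] at h
  omega

lemma aux_real (q0 qq M b : ℝ) (hq0 : 7 ≤ q0) (hqq : q0 ≤ qq) (hM : 1 ≤ M)
    (hsmall : 2 * b + 1 ≤ 3 * (qq + 1))
    (hineq : (q0 + 1) * b * (M * qq - 1) ≤ (b * b - b) * (M - 1) + (q0 + 1) * (M * qq ^ 2 - 1)) :
    b ≤ qq + qq / q0 + qq / q0 ^ 2 + 3 * qq / q0 ^ 3 := by
  by_contra hbR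
  push_neg at hbR
  set R : ℝ := qq + qq / q0 + qq / q0 ^ 2 + 3 * qq / q0 ^ 3 with hRdef
  set X : ℝ := (3 * qq + 3) / 2 with hXdef
  have hq0pos : (0 : ℝ) < q0 := by linarith
  have hqq7 : (7 : ℝ) ≤ qq := le_trans hq0 hqq
  have hdiv1 : 1 ≤ qq / q0 := (one_le_div hq0pos).mpr hqq
  have hdiv2 : 0 ≤ qq / q0 ^ 2 := by positivity
  have hdiv3 : 0 ≤ 3 * qq / q0 ^ 3 := by positivity
  have hRq1 : qq + 1 ≤ R := by rw [hRdef]; linarith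
  have hbq1 : qq + 1 < b := lt_of_le_of_lt hRq1 hbR
  have hbX : b < X := by rw [hXdef]; linarith
  have hRX : R < X := lt_trans hbR hbX
  -- P x := x^2 - x*(1 + (q0+1)*qq) + (q0+1)*qq^2
  have hMP : M * (b ^ 2 - b * (1 + (q0 + 1) * qq) + (q0 + 1) * qq ^ 2)
      ≥ (b - 1) * (b - q0 - 1) := by nlinarith [hineq]
  have hPb_pos : 0 < b ^ 2 - b * (1 + (q0 + 1) * qq) + (q0 + 1) * qq ^ 2 := by
    have h1 : 0 < (b - 1) * (b - q0 - 1) := by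
      apply mul_pos <;> nlinarith
    nlinarith
  -- endpoint values
  have hPX : X ^ 2 - X * (1 + (q0 + 1) * qq) + (q0 + 1) * qq ^ 2 ≤ 0 := by
    have h4 : 4 * (X ^ 2 - X * (1 + (q0 + 1) * qq) + (q0 + 1) * qq ^ 2)
        = 9 * qq ^ 2 + 12 * qq + 3 - (q0 + 1) * (2 * qq ^ 2 + 6 * qq) := by
      rw [hXdef]; ring
    nlinarith [mul_le_mul_of_nonneg_right (by linarith : (8 : ℝ) ≤ q0 + 1)
      (by nlinarith : (0 : ℝ) ≤ 2 * qq ^ 2 + 6 * qq), sq_nonneg qq]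
  have hPR : R ^ 2 - R * (1 + (q0 + 1) * qq) + (q0 + 1) * qq ^ 2 ≤ 0 := by
    have hq0ne : q0 ≠ 0 := ne_of_gt hq0pos
    have hR3 : q0 ^ 3 * R = qq * (q0 ^ 3 + q0 ^ 2 + q0 + 3) := by
      rw [hRdef]; field_simp
    have hid : q0 ^ 6 * (R ^ 2 - R * (1 + (q0 + 1) * qq) + (q0 + 1) * qq ^ 2)
        = qq * qq * (-(q0 ^ 4) + 5 * q0 ^ 3 + 7 * q0 ^ 2 + 6 * q0 + 9)
          - qq * (q0 ^ 3 + q0 ^ 2 + q0 + 3) * q0 ^ 3 := by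
      linear_combination (q0 ^ 3 * R + qq * (q0 ^ 3 + q0 ^ 2 + q0 + 3)
        - q0 ^ 3 * (1 + (q0 + 1) * qq)) * hR3
    have hbr : -(q0 ^ 4) + 5 * q0 ^ 3 + 7 * q0 ^ 2 + 6 * q0 + 9 ≤ 0 := by
      have e1 : 7 * q0 ^ 3 ≤ q0 ^ 4 := by nlinarith [pow_pos hq0pos 3]
      have e2 : 7 * q0 ^ 2 ≤ q0 ^ 3 := by nlinarith [pow_pos hq0pos 2]
      have e3 : 7 * q0 ≤ q0 ^ 2 := by nlinarith
      linarith
    have hterm : qq * (q0 ^ 3 + q0 ^ 2 + q0 + 3) * q0 ^ 3 ≥ 0 := by positivity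
    have h6 : q0 ^ 6 * (R ^ 2 - R * (1 + (q0 + 1) * qq) + (q0 + 1) * qq ^ 2) ≤ 0 := by
      rw [hid]
      nlinarith [mul_nonneg (mul_nonneg (by linarith : (0:ℝ) ≤ qq) (by linarith : (0:ℝ) ≤ qq))
        (neg_nonneg.mpr hbr)]
    have hq06 : 0 < q0 ^ 6 := by positivity
    nlinarith [h6, hq06]
  -- interpolation
  have hkey : (X - R) * (b ^ 2 - b * (1 + (q0 + 1) * qq) + (q0 + 1) * qq ^ 2)
      = (X - b) * (R ^ 2 - R * (1 + (q0 + 1) * qq) + (q0 + 1) * qq ^ 2)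
        + (b - R) * (X ^ 2 - X * (1 + (q0 + 1) * qq) + (q0 + 1) * qq ^ 2)
        - (X - b) * (b - R) * (X - R) := by ring
  have hXb : 0 ≤ X - b := by linarith
  have hbRp : 0 ≤ b - R := by linarith
  have hXRp : 0 < X - R := by linarith
  have hneg : (X - R) * (b ^ 2 - b * (1 + (q0 + 1) * qq) + (q0 + 1) * qq ^ 2) ≤ 0 := by
    rw [hkey]
    have t1 : (X - b) * (R ^ 2 - R * (1 + (q0 + 1) * qq) + (q0 + 1) * qq ^ 2) ≤ 0 :=
      mul_nonpos_of_nonneg_of_nonpos hXb hPR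
    have t2 : (b - R) * (X ^ 2 - X * (1 + (q0 + 1) * qq) + (q0 + 1) * qq ^ 2) ≤ 0 :=
      mul_nonpos_of_nonneg_of_nonpos hbRp hPX
    have t3 : 0 ≤ (X - b) * (b - R) * (X - R) := by positivity
    linarith
  have hPb2 : b ^ 2 - b * (1 + (q0 + 1) * qq) + (q0 + 1) * qq ^ 2 ≤ 0 := by
    by_contra hc
    push_neg at hc
    nlinarith [mul_pos hXRp hc]
  linarith [hPb_pos, hPb2]

end AuxiliaryLemmas

/-- The size of a small minimal blocking set with exponent `e` in
`PG(n, q0^h)`, `q0 = p^e ≥ 7`, is at most `q0^h + q0^(h-1) + q0^(h-2) + 3 q0^(h-3)`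
(an inequality of real numbers, with real powers of `q0`). -/
theorem statement4 [Fintype F] (p t n e q0 h : ℕ) (hp : p.Prime) (ht : 1 ≤ t)
    (hq : Fintype.card F = p ^ t) (hV : finrank F V = n + 1)
    (B : Set (Projectivization F V))
    (hBsmall : IsSmall F B) (hBmin : IsMinimalBlockingSet F B)
    (hBexp : HasExponent F p B e) (he : e ∣ t)
    (hq0 : q0 = p ^ e) (hh : h = t / e) (hq0big : 7 ≤ q0) :
    (B.ncard : ℝ) ≤ (q0 : ℝ) ^ (h : ℝ) + (q0 : ℝ) ^ ((h : ℝ) - 1)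
      + (q0 : ℝ) ^ ((h : ℝ) - 2) + 3 * (q0 : ℝ) ^ ((h : ℝ) - 3) := by
  classical
  obtain ⟨he1, hmod, -⟩ := hBexp
  obtain ⟨hblock, -⟩ := hBmin
  -- basic instances
  haveI hFD : FiniteDimensional F V :=
    Module.finite_of_finrank_pos (by rw [hV]; omega)
  haveI : Finite V := aux_finiteV (F := F)
  haveI : Finite (Submodule F V) :=
    Finite.of_injective (fun W : Submodule F V => (W : Set V)) SetLike.coe_injective
  haveI : Fintype (Submodule F V) := Fintype.ofFinite _
  haveI : Finite (Projectivization F V) := Quotient.finite _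
  have hBfin : B.Finite := Set.toFinite B
  set q : ℕ := Fintype.card F with hqdef
  have hq2 : 2 ≤ q := Fintype.one_lt_card
  set b : ℕ := B.ncard with hbdef
  -- arithmetic on exponents
  have hq0_1 : 1 ≤ q0 := by omega
  have het : e ≤ t := Nat.le_of_dvd ht he
  have hh1 : 1 ≤ h := by
    rw [hh]
    exact (Nat.one_le_div_iff (by omega)).mpr het
  have hqpow : q = q0 ^ h := by
    rw [hq, hq0, ← pow_mul, hh, Nat.mul_div_cancel' he]
  have hq0q : q0 ≤ q := by
    calc q0 = q0 ^ 1 := (pow_one q0).symm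
    _ ≤ q0 ^ h := Nat.pow_le_pow_right (by omega) hh1
    _ = q := hqpow.symm
  -- n ≥ 1
  have hn1 : 1 ≤ n := by
    by_contra hn
    have hn0 : n = 0 := by omega
    have hhyp : IsHyperplane F (⊥ : Submodule F V) := by
      show finrank F (⊥ : Submodule F V) + 1 = finrank F V
      rw [finrank_bot, hV, hn0]
    obtain ⟨x, -, hx⟩ := hblock ⊥ hhyp
    have hle : x.submodule ≤ ⊥ := hx
    have h1 : finrank F x.submodule = 1 := x.finrank_submodule
    rw [le_bot_iff] at hle
    rw [hle, finrank_bot] at h1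
    omega
  obtain ⟨m, rfl⟩ : ∃ m, n = m + 1 := ⟨n - 1, by omega⟩
  -- trivial case b = 0
  rcases Nat.eq_zero_or_pos b with hb0 | hb1
  · rw [hb0]
    push_cast
    positivity
  -- finsets
  set Bf : Finset (Projectivization F V) := hBfin.toFinset with hBfdef
  have hbcard : Bf.card = b := by
    rw [hbdef, Set.ncard_eq_toFinset_card B hBfin]
  set H : Finset (Submodule F V) := Finset.univ.filter (fun W => IsHyperplane F W) with hHdef
  set s : Submodule F V → ℕ :=
    fun W => (Bf.filter (fun x => x.submodule ≤ W)).card with hsdef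
  have hs_eq : ∀ W : Submodule F V, (B ∩ projPoints F W).ncard = s W := by
    intro W
    have hset : (B ∩ projPoints F W) = ↑(Bf.filter (fun x => x.submodule ≤ W)) := by
      ext x
      simp [hBfdef, Set.Finite.mem_toFinset, projPoints, Set.mem_setOf_eq]
    rw [hset, Set.ncard_coe_finset]
  -- section sizes: ≥ 1 and ≡ 1 mod q0
  have hs1 : ∀ W ∈ H, 1 ≤ s W := by
    intro W hW
    rw [hHdef, Finset.mem_filter] at hW
    obtain ⟨x, hx⟩ := hblock W hW.2
    rw [← hs_eq]
    exact (Set.ncard_pos (hBfin.inter_of_left _)).mpr ⟨x, hx⟩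
  have hsmod : ∀ W ∈ H, s W = 1 ∨ q0 + 1 ≤ s W := by
    intro W hW
    rcases eq_or_ne (s W) 1 with h1 | h1
    · exact Or.inl h1
    · right
      have hWH : IsHyperplane F W := (Finset.mem_filter.mp hW).2
      have hmodW : s W ≡ 1 [MOD q0] := by
        rw [← hs_eq, hq0]
        exact hmod W hWH
      have hdvd : q0 ∣ s W - 1 := (Nat.modEq_iff_dvd' (hs1 W hW)).mp hmodW.symm
      have hpos : 0 < s W - 1 := by
        have := hs1 W hW
        omega
      have := Nat.le_of_dvd hpos hdvd
      omega
  -- per-hyperplane quadratic inequality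
  have hkey : ∀ W ∈ H, (q0 + 2) * s W ≤ s W * s W + (q0 + 1) := by
    intro W hW
    rcases hsmod W hW with h1 | h1
    · rw [h1]; omega
    · nlinarith [h1]
  have hsum1 : (q0 + 2) * ∑ W ∈ H, s W ≤ (∑ W ∈ H, s W * s W) + (q0 + 1) * H.card := by
    calc (q0 + 2) * ∑ W ∈ H, s W = ∑ W ∈ H, (q0 + 2) * s W := Finset.mul_sum _ _ _
    _ ≤ ∑ W ∈ H, (s W * s W + (q0 + 1)) := Finset.sum_le_sum hkey
    _ = (∑ W ∈ H, s W * s W) + (q0 + 1) * H.card := by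
        rw [Finset.sum_add_distrib, Finset.sum_const, smul_eq_mul, mul_comm]
  have hsplit : ∑ W ∈ H, s W * s W = (∑ W ∈ H, (s W * s W - s W)) + ∑ W ∈ H, s W := by
    rw [← Finset.sum_add_distrib]
    apply Finset.sum_congr rfl
    intro W hW
    have : s W ≤ s W * s W := by nlinarith [hs1 W hW]
    omega
  -- the counting lemma, in Finset form
  have hcount : ∀ S : Submodule F V,
      (q - 1) * (H.filter (fun W => S ≤ W)).card = q ^ (finrank F V - finrank F S) - 1 := by
    intro S
    have h1 : H.filter (fun W => S ≤ W)
        = Finset.univ.filter (fun W : Submodule F V => IsHyperplane F W ∧ S ≤ W) := by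
      rw [hHdef, Finset.filter_filter]
    have h2 : (Finset.univ.filter (fun W : Submodule F V => IsHyperplane F W ∧ S ≤ W)).card
        = Nat.card {W : Submodule F V // IsHyperplane F W ∧ S ≤ W} := by
      rw [Nat.card_eq_fintype_card, Fintype.card_subtype]
    rw [h1, h2]
    exact aux_count S
  -- incidence identities
  have hI1 : ∑ W ∈ H, s W = ∑ x ∈ Bf, (H.filter (fun W => x.submodule ≤ W)).card := by
    simp only [hsdef, Finset.card_filter]
    exact Finset.sum_comm
  have hE1 : (q - 1) * ∑ W ∈ H, s W = b * (q ^ (m + 1) - 1) := by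
    rw [hI1, Finset.mul_sum]
    have hx : ∀ x ∈ Bf, (q - 1) * (H.filter (fun W => x.submodule ≤ W)).card
        = q ^ (m + 1) - 1 := by
      intro x _
      rw [hcount x.submodule, hV, x.finrank_submodule]
      norm_num
    rw [Finset.sum_congr rfl hx, Finset.sum_const, smul_eq_mul, hbcard]
  have hI2 : ∑ W ∈ H, (s W * s W - s W)
      = ∑ z ∈ Bf.offDiag, (H.filter (fun W => z.1.submodule ⊔ z.2.submodule ≤ W)).card := by
    have hoff : ∀ W : Submodule F V, s W * s W - s W
        = (Bf.offDiag.filter (fun z => z.1.submodule ≤ W ∧ z.2.submodule ≤ W)).card := by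
      intro W
      rw [hsdef, ← Finset.offDiag_card]
      congr 1
      ext z
      simp only [Finset.mem_offDiag, Finset.mem_filter]
      tauto
    simp only [hoff, Finset.card_filter]
    rw [Finset.sum_comm]
    apply Finset.sum_congr rfl
    intro z _
    apply Finset.sum_congr rfl
    intro W _
    congr 1
    simp [sup_le_iff]
  have hE2 : (q - 1) * ∑ W ∈ H, (s W * s W - s W) = (b * b - b) * (q ^ m - 1) := by
    rw [hI2, Finset.mul_sum]
    have hz : ∀ z ∈ Bf.offDiag,
        (q - 1) * (H.filter (fun W => z.1.submodule ⊔ z.2.submodule ≤ W)).card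
        = q ^ m - 1 := by
      intro z hz
      have hne : z.1 ≠ z.2 := (Finset.mem_offDiag.mp hz).2.2
      rw [hcount _, hV, aux_sup_rank z.1 z.2 hne]
      have hmm : m + 1 + 1 - 2 = m := by omega
      rw [hmm]
    rw [Finset.sum_congr rfl hz, Finset.sum_const, smul_eq_mul, Finset.offDiag_card, hbcard]
  have hE3 : (q - 1) * H.card = q ^ (m + 2) - 1 := by
    have hfil : H = H.filter (fun W => (⊥ : Submodule F V) ≤ W) :=
      (Finset.filter_true_of_mem (fun _ _ => bot_le)).symm
    rw [hfil, hcount ⊥, hV, finrank_bot]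
    norm_num
  -- cast everything to ℝ
  have hb_le : b ≤ b * b := by nlinarith [hb1]
  have hq1 : (1:ℕ) ≤ q := by omega
  have hqm : (1:ℕ) ≤ q ^ m := Nat.one_le_pow _ _ (by omega)
  have hqm1 : (1:ℕ) ≤ q ^ (m + 1) := Nat.one_le_pow _ _ (by omega)
  have hqm2 : (1:ℕ) ≤ q ^ (m + 2) := Nat.one_le_pow _ _ (by omega)
  set Q : ℝ := (q : ℝ) with hQdef
  set Q0 : ℝ := (q0 : ℝ) with hQ0def
  set br : ℝ := (b : ℝ) with hbrdef
  set sr : ℝ := ((∑ W ∈ H, s W : ℕ) : ℝ) with hsrdef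
  set tr : ℝ := ((∑ W ∈ H, (s W * s W - s W) : ℕ) : ℝ) with htrdef
  set Hr : ℝ := ((H.card : ℕ) : ℝ) with hHrdef
  have hE1R : (Q - 1) * sr = br * (Q ^ (m + 1) - 1) := by
    rw [hQdef, hsrdef, hbrdef]
    have := congrArg (fun k : ℕ => (k : ℝ)) hE1
    push_cast [Nat.cast_sub hq1, Nat.cast_sub hqm1] at this
    convert this using 2 <;> push_cast <;> ring
  have hE2R : (Q - 1) * tr = (br * br - br) * (Q ^ m - 1) := by
    rw [hQdef, htrdef, hbrdef]
    have := congrArg (fun k : ℕ => (k : ℝ)) hE2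
    push_cast [Nat.cast_sub hq1, Nat.cast_sub hqm, Nat.cast_sub hb_le] at this
    convert this using 2 <;> push_cast <;> ring
  have hE3R : (Q - 1) * Hr = Q ^ (m + 2) - 1 := by
    rw [hQdef, hHrdef]
    have := congrArg (fun k : ℕ => (k : ℝ)) hE3
    push_cast [Nat.cast_sub hq1, Nat.cast_sub hqm2] at this
    convert this using 2 <;> push_cast <;> ring
  have hsum1R : (Q0 + 2) * sr ≤ tr + sr + (Q0 + 1) * Hr := by
    rw [hQ0def, hsrdef, htrdef, hHrdef]
    have h1 := hsum1
    rw [hsplit] at h1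
    exact_mod_cast h1
  have hQ1R : (1:ℝ) ≤ Q := by rw [hQdef]; exact_mod_cast hq1
  have hQ0R : (7:ℝ) ≤ Q0 := by rw [hQ0def]; exact_mod_cast hq0big
  have hQ0Q : Q0 ≤ Q := by rw [hQdef, hQ0def]; exact_mod_cast hq0q
  -- combine into the main real inequality
  have hmono : (Q0 + 2) * ((Q - 1) * sr) ≤ (Q - 1) * tr + (Q - 1) * sr
      + (Q0 + 1) * ((Q - 1) * Hr) := by
    have := mul_le_mul_of_nonneg_left hsum1R (by linarith : (0:ℝ) ≤ Q - 1)
    nlinarith [this]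
  rw [hE1R, hE2R, hE3R] at hmono
  have hineq : (Q0 + 1) * br * (Q ^ m * Q - 1)
      ≤ (br * br - br) * (Q ^ m - 1) + (Q0 + 1) * (Q ^ m * Q ^ 2 - 1) := by
    have hp1 : Q ^ (m + 1) = Q ^ m * Q := pow_succ Q m
    have hp2 : Q ^ (m + 2) = Q ^ m * Q ^ 2 := by ring
    rw [hp1, hp2] at hmono
    nlinarith [hmono]
  -- small condition
  have hsmallR : 2 * br + 1 ≤ 3 * (Q + 1) := by
    rw [hbrdef, hQdef]
    have h1 : 2 * b + 1 ≤ 3 * (q + 1) := hBsmall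
    exact_mod_cast h1
  have hMR : (1:ℝ) ≤ Q ^ m := one_le_pow₀ hQ1R
  have hfinal := aux_real Q0 Q (Q ^ m) br hQ0R hQ0Q hMR hsmallR hineq
  -- convert the goal
  have hQpow : Q = Q0 ^ h := by
    rw [hQdef, hQ0def, hqpow]
    push_cast
    ring
  have hQ0pos : (0:ℝ) < Q0 := by linarith
  have hr1 : (Q0 : ℝ) ^ ((h : ℝ)) = Q0 ^ (h:ℕ) := Real.rpow_natCast Q0 h
  have hr2 : (Q0 : ℝ) ^ ((h : ℝ) - 1) = Q0 ^ (h:ℕ) / Q0 := by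
    rw [Real.rpow_sub hQ0pos, Real.rpow_one, Real.rpow_natCast]
  have hr3 : (Q0 : ℝ) ^ ((h : ℝ) - 2) = Q0 ^ (h:ℕ) / Q0 ^ (2:ℕ) := by
    rw [Real.rpow_sub hQ0pos, Real.rpow_natCast]
    congr 1
    rw [show ((2:ℝ)) = ((2:ℕ):ℝ) by norm_num, Real.rpow_natCast]
  have hr4 : (Q0 : ℝ) ^ ((h : ℝ) - 3) = Q0 ^ (h:ℕ) / Q0 ^ (3:ℕ) := by
    rw [Real.rpow_sub hQ0pos, Real.rpow_natCast]
    congr 1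
    rw [show ((3:ℝ)) = ((3:ℕ):ℝ) by norm_num, Real.rpow_natCast]
  rw [hr1, hr2, hr3, hr4, ← hQpow]
  calc (b:ℝ) = br := by rw [hbrdef]
  _ ≤ Q + Q / Q0 + Q / Q0 ^ 2 + 3 * Q / Q0 ^ 3 := hfinal
  _ ≤ Q + Q / Q0 + Q / Q0 ^ 2 + 3 * (Q / Q0 ^ 3) := by ring_nf; exact le_refl _
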